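/- Let R be an integral domain of Krull dimension 1. Then every upper triangular unimodular 2×2 matrix over R is simply extendable. -/

import Mathlib

open Matrix

/-- A `2 × 2` matrix is unimodular if its four entries generate the unit ideal. -/
def Unimodular2 {R : Type*} [CommRing R] (A : Matrix (Fin 2) (Fin 2) R) : Prop :=
  Ideal.span {A 0 0, A 0 1, A 1 0, A 1 1} = ⊤

/-- A `2 × 2` matrix is extendable if it is the top-left block of a `3 × 3` matrix
of determinant `1`. -/
def Extendable {R : Type*} [CommRing R] (A : Matrix (Fin 2) (Fin 2) R) : Prop :=
  ∃ B : Matrix (Fin 3) (Fin 3) R, B.det = 1 ∧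
    ∀ i j : Fin 2, B i.castSucc j.castSucc = A i j

/-- A `2 × 2` matrix is simply extendable if it is the top-left block of a `3 × 3` matrix
of determinant `1` whose `(3,3)` entry is `0`. -/
def SimplyExtendable {R : Type*} [CommRing R] (A : Matrix (Fin 2) (Fin 2) R) : Prop :=
  ∃ B : Matrix (Fin 3) (Fin 3) R, B.det = 1 ∧
    (∀ i j : Fin 2, B i.castSucc j.castSucc = A i j) ∧ B 2 2 = 0


open Finset in
lemma unit_lemma {S : Type*} [CommRing S] (a b x u v : S) (n : ℕ)
    (h1 : a ^ n = a ^ (n + 1) * x) (h2 : u * a + v * b = 1) :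
    ∃ w, IsUnit (b + w * a) := by
  set e := a ^ n * x ^ n with he
  have hae : ∀ m : ℕ, a ^ n * (a * x) ^ m = a ^ n := by
    intro m
    induction m with
    | zero => simp
    | succ k ih =>
      rw [pow_succ, ← mul_assoc, ih]
      linear_combination -h1
  have hane : a ^ n * e = a ^ n := by
    have := hae n; rw [mul_pow] at this; rw [he]; ring_nf; ring_nf at this
    linear_combination this
  have hee : e * e = e := by
    calc e * e = (a ^ n * e) * x ^ n := by rw [he]; ring
    _ = e := by rw [hane, he]
  have hgeo : (1 - u*a) * (∑ k ∈ range n, (u*a)^k) = 1 - (u*a)^n := by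
    have := geom_sum_mul (u*a) n
    linear_combination -this
  refine ⟨(1 - b) * x * e, ?_⟩
  set c := v * ∑ k ∈ range n, (u*a)^k with hc
  refine IsUnit.of_mul_eq_one (c * (1 - e) + e) ?_
  have hwa : (1 - b) * x * e * a = (1 - b) * e := by
    calc (1-b) * x * e * a = (1-b) * (a^(n+1) * x * x^n) := by rw [he]; ring
    _ = (1-b) * (a^n * x^n) := by rw [← h1]
    _ = (1-b) * e := by rw [he]
  rw [hwa]
  have hbc : b * c = 1 - (u*a)^n := by
    rw [hc]
    calc b * (v * ∑ k ∈ range n, (u*a)^k) = (v*b) * (∑ k ∈ range n, (u*a)^k) := by ring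
    _ = (1 - u*a) * (∑ k ∈ range n, (u*a)^k) := by rw [show v*b = 1 - u*a by linear_combination h2]
    _ = 1 - (u*a)^n := hgeo
  have han1e : (u*a)^n * (1 - e) = 0 := by
    rw [mul_pow]
    calc u^n * a^n * (1 - e) = u^n * (a^n - a^n*e) := by ring
    _ = 0 := by rw [hane]; ring
  calc (b + (1-b)*e) * (c * (1-e) + e)
      = b*c*(1-e) + (1-b)*e*c*(1-e) + b*e + (1-b)*(e*e) := by ring
    _ = b*c*(1-e) + (1-b)*c*(e*(1-e)) + b*e + (1-b)*e := by rw [hee]; ring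
    _ = b*c*(1-e) + e := by
        have : e*(1-e) = 0 := by rw [mul_sub, hee]; ring
        rw [this]; ring
    _ = (1 - (u*a)^n)*(1-e) + e := by rw [hbc]
    _ = 1 - (u*a)^n*(1-e) := by ring
    _ = 1 := by rw [han1e]; ring


lemma dim_lemma {R : Type*} [CommRing R] [IsDomain R] (hdim : ringKrullDim R = 1)
    (a d : R) (hd : d ≠ 0) :
    ∃ (n : ℕ) (x : R), a ^ n - a ^ (n + 1) * x ∈ Ideal.span {d} := by
  by_contra hcon
  push_neg at hcon
  set S : Submonoid R :=
    { carrier := {r | ∃ (n : ℕ) (y : R), r = a ^ n * (1 - a * y)}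
      mul_mem' := by
        rintro r s ⟨n, y, rfl⟩ ⟨m, z, rfl⟩
        exact ⟨n + m, y + z - a * y * z, by ring⟩
      one_mem' := ⟨0, 0, by ring⟩ } with hS
  have hdisj : Disjoint (Ideal.span {d} : Set R) (S : Set R) := by
    rw [Set.disjoint_left]
    rintro r hr ⟨n, y, rfl⟩
    exact hcon n y (by simpa [sub_eq_iff_eq_add] using
      (show a ^ n - a ^ (n+1) * y ∈ Ideal.span {d} by
        convert (SetLike.mem_coe.mp hr) using 1; ring))
  obtain ⟨p, hp, hle, hpd⟩ := Ideal.exists_le_prime_disjoint _ S hdisj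
  have hap : a ∉ p := fun h => Set.disjoint_left.mp hpd h ⟨1, 0, by ring⟩
  have hJ : p ⊔ Ideal.span {a} ≠ ⊤ := by
    intro htop
    rw [Ideal.eq_top_iff_one, Submodule.mem_sup] at htop
    obtain ⟨q, hq, z, hz, hqz⟩ := htop
    rw [Ideal.mem_span_singleton'] at hz
    obtain ⟨c, rfl⟩ := hz
    have : q ∈ (S : Set R) := ⟨0, c, by linear_combination hqz⟩
    exact Set.disjoint_left.mp hpd hq this
  obtain ⟨m, hm, hJm⟩ := Ideal.exists_le_maximal _ hJ
  -- build the chain ⊥ < p < m in PrimeSpectrum R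
  have hbotp : (⊥ : Ideal R) < p := by
    refine lt_of_le_of_ne bot_le fun h => ?_
    have : d ∈ p := hle (Ideal.subset_span rfl)
    rw [← h] at this
    exact hd (by simpa using this)
  have hpm : p < m := by
    refine lt_of_le_of_ne (le_trans le_sup_left hJm) fun h => ?_
    have ham : a ∈ m := hJm (Submodule.mem_sup_right (Ideal.mem_span_singleton_self a))
    rw [h] at hap
    exact hap ham
  let P0 : PrimeSpectrum R := ⟨⊥, Ideal.bot_prime⟩
  let P1 : PrimeSpectrum R := ⟨p, hp⟩
  let P2 : PrimeSpectrum R := ⟨m, hm.isPrime⟩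
  have c01 : P0 < P1 := hbotp
  have c12 : P1 < P2 := hpm
  let chain : LTSeries (PrimeSpectrum R) :=
    ((RelSeries.singleton _ P0).snoc P1 c01).snoc P2 (by
      show (_ : PrimeSpectrum R) < P2; exact lt_of_eq_of_lt (RelSeries.last_snoc _ _ _) c12)
  have hlen : chain.length = 2 := rfl
  have := Order.LTSeries.length_le_krullDim chain
  rw [hlen] at this
  rw [show ringKrullDim R = Order.krullDim (PrimeSpectrum R) from rfl] at hdim
  rw [hdim] at this
  norm_num at this

theorem stmt3 (R : Type*) [CommRing R] [IsDomain R] (hdim : ringKrullDim R = 1) :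
    ∀ A : Matrix (Fin 2) (Fin 2) R, Unimodular2 A → A 1 0 = 0 → SimplyExtendable A := by
  intro A hU h10
  set a := A 0 0 with ha
  set b := A 0 1 with hb
  set d := A 1 1 with hd
  rw [Unimodular2, h10] at hU
  have h1 : (1 : R) ∈ Ideal.span {a, b, (0 : R), d} := hU ▸ Submodule.mem_top
  obtain ⟨u, z1, hz1, he1⟩ := Ideal.mem_span_insert.mp h1
  obtain ⟨v, z2, hz2, he2⟩ := Ideal.mem_span_insert.mp hz1
  obtain ⟨t0, z3, hz3, he3⟩ := Ideal.mem_span_insert.mp hz2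
  obtain ⟨t, ht⟩ := Ideal.mem_span_singleton'.mp hz3
  have huvt : u * a + v * b + t * d = 1 := by
    rw [he1, he2, he3, ← ht]; ring
  by_cases hd0 : d = 0
  · refine ⟨!![a, b, 0; 0, d, 1; v, -u, 0], ?_, ?_, by simp⟩
    · simp only [Matrix.det_fin_three, Fin.isValue, Matrix.of_apply, Matrix.cons_val',
        Matrix.cons_val_zero, Matrix.empty_val', Matrix.cons_val_fin_one, Matrix.cons_val_one,
        Matrix.head_cons, Matrix.cons_val_two, Nat.succ_eq_add_one, Nat.reduceAdd,
        Matrix.tail_cons, Matrix.head_fin_const]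
      rw [hd0] at huvt
      linear_combination huvt
    · intro i j
      fin_cases i <;> fin_cases j <;> simp [ha, hb, hd, h10]
  · obtain ⟨n, x0, hx0⟩ := dim_lemma hdim a d hd0
    set I := Ideal.span {d} with hI
    let π : R →+* R ⧸ I := Ideal.Quotient.mk I
    have hπd : π d = 0 := Ideal.Quotient.eq_zero_iff_mem.mpr (Ideal.mem_span_singleton_self d)
    have h1q : (π a) ^ n = (π a) ^ (n + 1) * π x0 := by
      have h0 : π (a ^ n - a ^ (n + 1) * x0) = 0 := Ideal.Quotient.eq_zero_iff_mem.mpr hx0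
      rw [map_sub, _root_.map_mul, map_pow, map_pow, sub_eq_zero] at h0
      exact h0
    have h2q : π u * π a + π v * π b = 1 := by
      have := congrArg π huvt
      simp only [map_add, _root_.map_mul, _root_.map_one, hπd, mul_zero, add_zero] at this
      exact this
    obtain ⟨w0, hw⟩ := unit_lemma (π a) (π b) (π x0) (π u) (π v) n h1q h2q
    obtain ⟨w, rfl⟩ := Ideal.Quotient.mk_surjective w0
    obtain ⟨s0, hs⟩ := hw.exists_right_inv
    obtain ⟨s, rfl⟩ := Ideal.Quotient.mk_surjective s0
    have hmem : (b + w * a) * s - 1 ∈ I := by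
      rw [← Ideal.Quotient.eq_zero_iff_mem]
      have h4 : π ((b + w * a) * s - 1) = (π b + π w * π a) * π s - 1 := by
        rw [map_sub, _root_.map_mul, map_add, _root_.map_mul, _root_.map_one]
      rw [h4, hs, sub_self]
    obtain ⟨k, hk⟩ := Ideal.mem_span_singleton'.mp hmem
    refine ⟨!![a, b, k; 0, d, s; 1, -w, 0], ?_, ?_, by simp⟩
    · simp only [Matrix.det_fin_three, Fin.isValue, Matrix.of_apply, Matrix.cons_val',
        Matrix.cons_val_zero, Matrix.empty_val', Matrix.cons_val_fin_one, Matrix.cons_val_one,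
        Matrix.head_cons, Matrix.cons_val_two, Nat.succ_eq_add_one, Nat.reduceAdd,
        Matrix.tail_cons, Matrix.head_fin_const]
      linear_combination -hk
    · intro i j
      fin_cases i <;> fin_cases j <;> simp [ha, hb, hd, h10]
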